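/- Consider random variables $Y_1^a, Y_2^{a,e_1=0}$ (binary) and a uniform random variable $U \sim \mathrm{Unif}[0,1]$. Fix constants $p_1, p_2, q_1, q_2 \in (0,1)$ with $p_1+p_2 \le 1$ and $q_1+q_2 \le 1$. Define $\Delta Y_1^{1} = \mathbb{1}(U \le p_1)$, $\Delta Y_2^{1,e_1=0} = \mathbb{1}(U \le p_1 + p_2)$, $\Delta Y_1^{0} = \mathbb{1}(U \le q_1)$, $\Delta Y_2^{0,e_1=0} = \mathbb{1}(q_1 < U \le q_1 + q_2)$, and $\Delta Y_2^{a,e_1=1} = \Delta Y_2^{a,e_1=0}\cdot \mathbb{1}(\Delta Y_1^a = 0)$. Then: (i) $E[\Delta Y_1^a] = p_1$ (resp. $q_1$), $E[\Delta Y_2^{a,e_1=1}] = p_2$ (resp. $q_2$); (ii) $E[\Delta Y_2^{1,e_1=0}] = p_1 + p_2$ and $E[\Delta Y_2^{0,e_1=0}] = q_2$; hence (iii) the ratio $E[\Delta Y_2^{1,e_1=0}]/E[\Delta Y_2^{0,e_1=0}] = (p_1+p_2)/q_2$, attaining the lower bound $\mathcal{L}_2 = 1 - (p_1+p_2)/q_2$.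 -/

import Mathlib

open MeasureTheory ProbabilityTheory

/-- Data generating mechanism S1 attains the lower bound `𝓛₂`: constructing
all counterfactuals from a single uniform variable `U`, the observed
incidences equal `(p₁,p₂)` and `(q₁,q₂)` in the two arms, the isolation
counterfactuals have means `p₁+p₂` and `q₂`, and their ratio equals
`(p₁+p₂)/q₂`, attaining `𝓛₂ = 1 - (p₁+p₂)/q₂`. -/
theorem dgm_attains_lower_bound
    {Ω : Type*} [MeasurableSpace Ω] (μ : Measure Ω) [IsProbabilityMeasure μ]
    (U : Ω → ℝ) (hU : Measurable U)
    (hUnif : ∀ t ∈ Set.Icc (0:ℝ) 1, μ {ω | U ω ≤ t} = ENNReal.ofReal t)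
    (p1 p2 q1 q2 : ℝ)
    (hp1 : p1 ∈ Set.Ioo (0:ℝ) 1) (hp2 : p2 ∈ Set.Ioo (0:ℝ) 1)
    (hq1 : q1 ∈ Set.Ioo (0:ℝ) 1) (hq2 : q2 ∈ Set.Ioo (0:ℝ) 1)
    (hp : p1 + p2 ≤ 1) (hq : q1 + q2 ≤ 1)
    -- counterfactual indicators constructed from U
    (dY1v dY2v0 dY2v1 dY1p dY2p0 dY2p1 : Ω → ℝ)
    (hdY1v : ∀ ω, dY1v ω = if U ω ≤ p1 then 1 else 0)
    (hdY2v0 : ∀ ω, dY2v0 ω = if U ω ≤ p1 + p2 then 1 else 0)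
    (hdY1p : ∀ ω, dY1p ω = if U ω ≤ q1 then 1 else 0)
    (hdY2p0 : ∀ ω, dY2p0 ω = if q1 < U ω ∧ U ω ≤ q1 + q2 then 1 else 0)
    (hdY2v1 : ∀ ω, dY2v1 ω = dY2v0 ω * (if dY1v ω = 0 then 1 else 0))
    (hdY2p1 : ∀ ω, dY2p1 ω = dY2p0 ω * (if dY1p ω = 0 then 1 else 0)) :
    -- (i) observed incidences
    (∫ ω, dY1v ω ∂μ = p1 ∧ ∫ ω, dY1p ω ∂μ = q1 ∧
      ∫ ω, dY2v1 ω ∂μ = p2 ∧ ∫ ω, dY2p1 ω ∂μ = q2) ∧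
    -- (ii) isolation counterfactual means
    (∫ ω, dY2v0 ω ∂μ = p1 + p2 ∧ ∫ ω, dY2p0 ω ∂μ = q2) ∧
    -- (iii) the ratio attains the lower bound
    (∫ ω, dY2v0 ω ∂μ) / (∫ ω, dY2p0 ω ∂μ) = (p1 + p2) / q2 := by
  obtain ⟨hp1pos, hp1lt⟩ := hp1
  obtain ⟨hp2pos, hp2lt⟩ := hp2
  obtain ⟨hq1pos, hq1lt⟩ := hq1
  obtain ⟨hq2pos, hq2lt⟩ := hq2
  -- integral of an indicator of a level set
  have hIic : ∀ t : ℝ, 0 ≤ t → t ≤ 1 →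
      ∫ ω, (if U ω ≤ t then (1:ℝ) else 0) ∂μ = t := by
    intro t ht ht1
    have hs : MeasurableSet {ω | U ω ≤ t} := hU measurableSet_Iic
    have : (fun ω => if U ω ≤ t then (1:ℝ) else 0)
        = Set.indicator {ω | U ω ≤ t} (fun _ => (1:ℝ)) := by
      funext ω; simp [Set.indicator_apply, Set.mem_setOf_eq]
    rw [this, integral_indicator_const _ hs, measureReal_def, hUnif t ⟨ht, ht1⟩]
    simp [ENNReal.toReal_ofReal ht]
  have hdiff : ∀ t s : ℝ, 0 ≤ t → t ≤ s → s ≤ 1 →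
      ∫ ω, (if t < U ω ∧ U ω ≤ s then (1:ℝ) else 0) ∂μ = s - t := by
    intro t s ht hts hs1
    have hset : {ω | t < U ω ∧ U ω ≤ s} = {ω | U ω ≤ s} \ {ω | U ω ≤ t} := by
      ext ω; simp [Set.mem_setOf_eq, Set.mem_diff, not_le, and_comm]
    have hss : MeasurableSet {ω | t < U ω ∧ U ω ≤ s} := by
      rw [hset]; exact (hU measurableSet_Iic).diff (hU measurableSet_Iic)
    have hmeas : μ {ω | t < U ω ∧ U ω ≤ s} = ENNReal.ofReal (s - t) := by
      have hsub : {ω | U ω ≤ t} ⊆ {ω | U ω ≤ s} := fun ω hω => le_trans hω hts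
      rw [hset, measure_diff hsub
        (hU measurableSet_Iic).nullMeasurableSet (measure_ne_top μ _),
        hUnif s ⟨le_trans ht hts, hs1⟩, hUnif t ⟨ht, le_trans hts hs1⟩,
        ← ENNReal.ofReal_sub _ ht]
    have : (fun ω => if t < U ω ∧ U ω ≤ s then (1:ℝ) else 0)
        = Set.indicator {ω | t < U ω ∧ U ω ≤ s} (fun _ => (1:ℝ)) := by
      funext ω; simp [Set.indicator_apply, Set.mem_setOf_eq]
    rw [this, integral_indicator_const _ hss, measureReal_def, hmeas]
    simp [ENNReal.toReal_ofReal (by linarith : (0:ℝ) ≤ s - t)]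
  -- simplify the product forms
  have hv1 : ∀ ω, dY2v1 ω = if p1 < U ω ∧ U ω ≤ p1 + p2 then 1 else 0 := by
    intro ω
    rw [hdY2v1 ω, hdY2v0 ω, hdY1v ω]
    rcases le_or_gt (U ω) p1 with h | h
    · have h2 : U ω ≤ p1 + p2 := by linarith
      simp [h, h2, not_lt.mpr h]
    · simp [not_le.mpr h, h]
  have hp1' : ∀ ω, dY2p1 ω = dY2p0 ω := by
    intro ω
    rw [hdY2p1 ω, hdY2p0 ω, hdY1p ω]
    rcases le_or_gt (U ω) q1 with h | h
    · simp [h, not_lt.mpr h]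
    · simp [not_le.mpr h, h]
  have e1 : ∫ ω, dY1v ω ∂μ = p1 := by
    simp only [hdY1v]; exact hIic p1 hp1pos.le hp1lt.le
  have e2 : ∫ ω, dY1p ω ∂μ = q1 := by
    simp only [hdY1p]; exact hIic q1 hq1pos.le hq1lt.le
  have e3 : ∫ ω, dY2v1 ω ∂μ = p2 := by
    simp only [hv1]
    have := hdiff p1 (p1 + p2) hp1pos.le (by linarith) hp
    linarith [this]
  have e5 : ∫ ω, dY2p0 ω ∂μ = q2 := by
    simp only [hdY2p0]
    have := hdiff q1 (q1 + q2) hq1pos.le (by linarith) hq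
    linarith [this]
  have e4 : ∫ ω, dY2p1 ω ∂μ = q2 := by
    simp only [hp1']; exact e5
  have e6 : ∫ ω, dY2v0 ω ∂μ = p1 + p2 := by
    simp only [hdY2v0]; exact hIic (p1 + p2) (by linarith) hp
  refine ⟨⟨e1, e2, e3, e4⟩, ⟨e6, e5⟩, by rw [e6, e5]⟩
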